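/- Let n ∈ ℕ, f : [a,b] → ℝ have n−1 derivatives with f^{(n−1)} absolutely continuous, p integrable on [a,b], x ∈ [a,b]. Then ∫_a^b p(t) f(t) dt − Σ_{k=0}^{n−1} (1/k!) (∫_a^b p(t)(t−x)^k dt) f^{(k)}(x) = ∫_a^b r_x^n(t) f^{(n)}(t) dt, where r_x^n is defined recursively by r_x^0 = p and r_x^k = r_x(r_x^{k−1}). -/

import Mathlib

open MeasureTheory intervalIntegral

/-- The kernels `r_x^k` (case `w ≡ 1`): `r_x^0 = p` and
`r_x^{k+1}(s) = −∫_a^s r_x^k` for `s ≤ x`, `∫_s^b r_x^k` for `s ≥ x`. -/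
noncomputable def rk (a b x : ℝ) (p : ℝ → ℝ) : ℕ → ℝ → ℝ
  | 0 => p
  | k + 1 => fun s =>
      if s ≤ x then -(∫ t in a..s, rk a b x p k t)
      else ∫ t in s..b, rk a b x p k t

open Set

lemma rk_zero (a b x : ℝ) (p : ℝ → ℝ) : rk a b x p 0 = p := rfl

lemma rk_succ (a b x : ℝ) (p : ℝ → ℝ) (k : ℕ) (s : ℝ) :
    rk a b x p (k+1) s =
      if s ≤ x then -(∫ t in a..s, rk a b x p k t)
      else ∫ t in s..b, rk a b x p k t := rfl


lemma triangle_swap (c d : ℝ) (hcd : c ≤ d) (u v : ℝ → ℝ)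
    (hu : IntervalIntegrable u volume c d) (hv : IntervalIntegrable v volume c d) :
    ∫ s in c..d, (∫ t in c..s, u t) * v s = ∫ t in c..d, u t * (∫ s in t..d, v s) := by
  set μ := volume.restrict (Icc c d) with hμ
  have hu' : Integrable u μ := by
    rw [hμ]; exact (intervalIntegrable_iff_integrableOn_Icc_of_le hcd).mp hu
  have hv' : Integrable v μ := by
    rw [hμ]; exact (intervalIntegrable_iff_integrableOn_Icc_of_le hcd).mp hv
  set F : ℝ → ℝ → ℝ := fun t s => if t ≤ s then u t * v s else 0 with hF
  have hFint : Integrable (Function.uncurry F) (μ.prod μ) := by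
    have h1 : Integrable (fun q : ℝ × ℝ => u q.1 * v q.2) (μ.prod μ) := hu'.mul_prod hv'
    have h2 : Function.uncurry F =
        Set.indicator {q : ℝ × ℝ | q.1 ≤ q.2} (fun q => u q.1 * v q.2) := by
      funext q
      by_cases hq : q.1 ≤ q.2 <;>
        simp [Function.uncurry, hF, hq, Set.indicator, Set.mem_setOf_eq]
    rw [h2]
    exact h1.indicator (measurableSet_le measurable_fst measurable_snd)
  have swap := integral_integral_swap hFint
  have e1 : ∫ s in c..d, (∫ t in c..s, u t) * v s = ∫ s, (∫ t, F t s ∂μ) ∂μ := by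
    rw [integral_of_le hcd, hμ, ← integral_Icc_eq_integral_Ioc]
    refine setIntegral_congr_fun measurableSet_Icc (fun s hs => ?_)
    have h3 : ∀ t, F t s = (Iic s).indicator (fun t => u t * v s) t := by
      intro t
      by_cases ht : t ≤ s <;> simp [hF, ht, Set.indicator, Set.mem_Iic]
    rw [show (fun t => F t s) = (Iic s).indicator (fun t => u t * v s) from funext h3,
      MeasureTheory.integral_indicator measurableSet_Iic,
      Measure.restrict_restrict measurableSet_Iic,
      show Iic s ∩ Icc c d = Icc c s by
        ext y
        simp only [Set.mem_inter_iff, Set.mem_Icc, Set.mem_Iic]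
        exact ⟨fun h => ⟨h.2.1, h.1⟩, fun h => ⟨h.2, h.1, h.2.trans hs.2⟩⟩,
      MeasureTheory.integral_mul_const, integral_Icc_eq_integral_Ioc, ← integral_of_le hs.1]
  have e2 : ∫ t in c..d, u t * (∫ s in t..d, v s) = ∫ t, (∫ s, F t s ∂μ) ∂μ := by
    rw [integral_of_le hcd, hμ, ← integral_Icc_eq_integral_Ioc]
    refine setIntegral_congr_fun measurableSet_Icc (fun t ht => ?_)
    have h3 : ∀ s, F t s = (Ici t).indicator (fun s => u t * v s) s := by
      intro s
      by_cases hs : t ≤ s <;> simp [hF, hs, Set.indicator, Set.mem_Ici]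
    rw [show (fun s => F t s) = (Ici t).indicator (fun s => u t * v s) from funext h3,
      MeasureTheory.integral_indicator measurableSet_Ici,
      Measure.restrict_restrict measurableSet_Ici,
      show Ici t ∩ Icc c d = Icc t d by
        ext y
        simp only [Set.mem_inter_iff, Set.mem_Icc, Set.mem_Ici]
        exact ⟨fun h => ⟨h.1, h.2.2⟩, fun h => ⟨h.1, ht.1.trans h.1, h.2⟩⟩,
      MeasureTheory.integral_const_mul, integral_Icc_eq_integral_Ioc, ← integral_of_le ht.2]
  rw [e1, e2, swap]



lemma rk_integrable (a b x : ℝ) (hax : a ≤ x) (hxb : x ≤ b) (p : ℝ → ℝ)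
    (hp : IntervalIntegrable p volume a b) :
    ∀ k, IntervalIntegrable (rk a b x p k) volume a b := by
  intro k
  have hab : a ≤ b := hax.trans hxb
  have hxmem : x ∈ uIcc a b := by rw [Set.uIcc_of_le hab]; exact ⟨hax, hxb⟩
  induction k with
  | zero => exact hp
  | succ k ih =>
    have hRax : IntervalIntegrable (rk a b x p k) volume a x :=
      ih.mono_set (Set.uIcc_subset_uIcc Set.left_mem_uIcc hxmem)
    have hcont1 : ContinuousOn (fun s => -(∫ t in a..s, rk a b x p k t)) (uIcc a x) :=
      (intervalIntegral.continuousOn_primitive_interval' hRax Set.left_mem_uIcc).neg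
    have h1 : IntervalIntegrable (rk a b x p (k+1)) volume a x := by
      rw [intervalIntegrable_iff_integrableOn_Icc_of_le hax]
      have h' : IntervalIntegrable (fun s => -(∫ t in a..s, rk a b x p k t)) volume a x :=
        hcont1.intervalIntegrable
      rw [intervalIntegrable_iff_integrableOn_Icc_of_le hax] at h'
      exact h'.congr_fun (fun s hs => by simp [rk_succ, hs.2]) measurableSet_Icc
    have hcont2 : ContinuousOn (fun s => ∫ t in s..b, rk a b x p k t) (uIcc x b) := by
      apply continuousOn_primitive_interval_left
      rw [Set.uIcc_of_le hxb]
      exact ((intervalIntegrable_iff_integrableOn_Icc_of_le hab).mp ih).mono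
        (Set.Icc_subset_Icc hax le_rfl) le_rfl
    have h2 : IntervalIntegrable (rk a b x p (k+1)) volume x b := by
      rw [intervalIntegrable_iff_integrableOn_Ioc_of_le hxb]
      have h' : IntervalIntegrable (fun s => ∫ t in s..b, rk a b x p k t) volume x b :=
        hcont2.intervalIntegrable
      rw [intervalIntegrable_iff_integrableOn_Ioc_of_le hxb] at h'
      exact h'.congr_fun (fun s hs => by simp [rk_succ, not_le.mpr hs.1]) measurableSet_Ioc
    exact h1.trans h2

lemma rk_parts (a b x : ℝ) (hax : a ≤ x) (hxb : x ≤ b) (p : ℝ → ℝ)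
    (hp : IntervalIntegrable p volume a b) (k : ℕ)
    (g h : ℝ → ℝ) (hh : IntervalIntegrable h volume a b)
    (hg : ∀ y ∈ Set.Icc a b, g y = g x + ∫ t in x..y, h t) :
    ∫ t in a..b, rk a b x p k t * g t
      = (∫ t in a..b, rk a b x p k t) * g x
        + ∫ t in a..b, rk a b x p (k+1) t * h t := by
  have hab : a ≤ b := hax.trans hxb
  set R := rk a b x p k with hRdef
  have hR : IntervalIntegrable R volume a b := rk_integrable a b x hax hxb p hp k
  have hxmem : x ∈ uIcc a b := by rw [Set.uIcc_of_le hab]; exact ⟨hax, hxb⟩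
  have hRax : IntervalIntegrable R volume a x :=
    hR.mono_set (uIcc_subset_uIcc left_mem_uIcc hxmem)
  have hRxb : IntervalIntegrable R volume x b :=
    hR.mono_set (uIcc_subset_uIcc hxmem right_mem_uIcc)
  have hhax : IntervalIntegrable h volume a x :=
    hh.mono_set (uIcc_subset_uIcc left_mem_uIcc hxmem)
  have hhxb : IntervalIntegrable h volume x b :=
    hh.mono_set (uIcc_subset_uIcc hxmem right_mem_uIcc)
  have hPcont : ContinuousOn (fun s => ∫ t in x..s, h t) (uIcc a b) :=
    intervalIntegral.continuousOn_primitive_interval' hh hxmem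
  have step1 : ∫ t in a..b, R t * g t
      = ∫ t in a..b, R t * (g x + ∫ s in x..t, h s) := by
    rw [integral_of_le hab, integral_of_le hab]
    refine setIntegral_congr_fun measurableSet_Ioc (fun t ht => ?_)
    rw [hg t ⟨ht.1.le, ht.2⟩]
  have hint1 : IntervalIntegrable (fun t => R t * g x) volume a b := hR.mul_const _
  have hint2 : IntervalIntegrable (fun t => R t * (∫ s in x..t, h s)) volume a b :=
    hR.mul_continuousOn hPcont
  have h2ax : IntervalIntegrable (fun t => R t * (∫ s in x..t, h s)) volume a x :=
    hint2.mono_set (uIcc_subset_uIcc left_mem_uIcc hxmem)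
  have h2xb : IntervalIntegrable (fun t => R t * (∫ s in x..t, h s)) volume x b :=
    hint2.mono_set (uIcc_subset_uIcc hxmem right_mem_uIcc)
  have step2 : ∫ t in a..b, R t * (g x + ∫ s in x..t, h s)
      = (∫ t in a..b, R t) * g x + ∫ t in a..b, R t * (∫ s in x..t, h s) := by
    rw [show (fun t => R t * (g x + ∫ s in x..t, h s))
        = (fun t => R t * g x + R t * (∫ s in x..t, h s)) from
        funext fun t => mul_add _ _ _,
      intervalIntegral.integral_add hint1 hint2, intervalIntegral.integral_mul_const]
  -- left piece
  have left : ∫ s in a..x, R s * (∫ t in x..s, h t)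
      = ∫ s in a..x, rk a b x p (k+1) s * h s := by
    have tri := triangle_swap a x hax R h hRax hhax
    calc ∫ s in a..x, R s * (∫ t in x..s, h t)
        = -∫ t in a..x, R t * (∫ s in t..x, h s) := by
          rw [← intervalIntegral.integral_neg]
          refine intervalIntegral.integral_congr fun s hs => ?_
          rw [intervalIntegral.integral_symm s x]; ring
      _ = -∫ s in a..x, (∫ t in a..s, R t) * h s := by rw [tri]
      _ = ∫ s in a..x, rk a b x p (k+1) s * h s := by
          rw [← intervalIntegral.integral_neg]
          refine intervalIntegral.integral_congr fun s hs => ?_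
          have hsx : s ≤ x := by rw [uIcc_of_le hax] at hs; exact hs.2
          rw [rk_succ, if_pos hsx]; ring
  -- right piece
  have right : ∫ s in x..b, R s * (∫ t in x..s, h t)
      = ∫ s in x..b, rk a b x p (k+1) s * h s := by
    have tri := triangle_swap x b hxb h R hhxb hRxb
    calc ∫ s in x..b, R s * (∫ t in x..s, h t)
        = ∫ s in x..b, (∫ t in x..s, h t) * R s := by
          exact intervalIntegral.integral_congr fun s _ => mul_comm _ _
      _ = ∫ t in x..b, h t * (∫ s in t..b, R s) := tri
      _ = ∫ s in x..b, rk a b x p (k+1) s * h s := by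
          rw [integral_of_le hxb, integral_of_le hxb]
          refine setIntegral_congr_fun measurableSet_Ioc fun t ht => ?_
          rw [rk_succ, if_neg (not_le.mpr ht.1)]; ring
  -- integrability of rk (k+1) * h on the two pieces
  have hcont1 : ContinuousOn (fun s => -(∫ t in a..s, R t)) (uIcc a x) :=
    (intervalIntegral.continuousOn_primitive_interval' hRax Set.left_mem_uIcc).neg
  have hk1ax : IntervalIntegrable (fun s => rk a b x p (k+1) s * h s) volume a x := by
    rw [intervalIntegrable_iff_integrableOn_Icc_of_le hax]
    have h' : IntervalIntegrable (fun s => (-(∫ t in a..s, R t)) * h s) volume a x :=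
      hhax.continuousOn_mul hcont1
    rw [intervalIntegrable_iff_integrableOn_Icc_of_le hax] at h'
    exact h'.congr_fun (fun s hs => by rw [rk_succ, if_pos hs.2]) measurableSet_Icc
  have hcont2 : ContinuousOn (fun s => ∫ t in s..b, R t) (uIcc x b) := by
    apply continuousOn_primitive_interval_left
    rw [Set.uIcc_of_le hxb]
    exact ((intervalIntegrable_iff_integrableOn_Icc_of_le hab).mp hR).mono
      (Set.Icc_subset_Icc hax le_rfl) le_rfl
  have hk1xb : IntervalIntegrable (fun s => rk a b x p (k+1) s * h s) volume x b := by
    rw [intervalIntegrable_iff_integrableOn_Ioc_of_le hxb]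
    have h' : IntervalIntegrable (fun s => (∫ t in s..b, R t) * h s) volume x b :=
      hhxb.continuousOn_mul hcont2
    rw [intervalIntegrable_iff_integrableOn_Ioc_of_le hxb] at h'
    exact h'.congr_fun (fun s hs => by rw [rk_succ, if_neg (not_le.mpr hs.1)])
      measurableSet_Ioc
  have split1 : ∫ t in a..b, R t * (∫ s in x..t, h s)
      = (∫ t in a..x, R t * (∫ s in x..t, h s)) + ∫ t in x..b, R t * (∫ s in x..t, h s) :=
    (integral_add_adjacent_intervals h2ax h2xb).symm
  have split2 : (∫ t in a..x, rk a b x p (k+1) t * h t)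
        + ∫ t in x..b, rk a b x p (k+1) t * h t
      = ∫ t in a..b, rk a b x p (k+1) t * h t :=
    integral_add_adjacent_intervals hk1ax hk1xb
  rw [step1, step2, split1, left, right, split2]

lemma rk_moment (a b x : ℝ) (hax : a ≤ x) (hxb : x ≤ b) (p : ℝ → ℝ)
    (hp : IntervalIntegrable p volume a b) :
    ∀ k m : ℕ, ∫ t in a..b, rk a b x p k t * (t - x) ^ m
      = ((m.factorial : ℝ) / ((m + k).factorial : ℝ))
          * ∫ t in a..b, p t * (t - x) ^ (m + k) := by
  intro k
  induction k with
  | zero =>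
    intro m
    simp only [rk_zero, Nat.add_zero]
    rw [div_self (Nat.cast_ne_zero.mpr m.factorial_ne_zero), one_mul]
  | succ k ih =>
    intro m
    have hab : a ≤ b := hax.trans hxb
    have hcont : Continuous fun t : ℝ => ((m+1 : ℕ) : ℝ) * (t - x) ^ m := by continuity
    have hg : ∀ y ∈ Set.Icc a b, (fun t : ℝ => (t - x) ^ (m+1)) y
        = (fun t : ℝ => (t - x) ^ (m+1)) x
          + ∫ t in x..y, ((m+1 : ℕ) : ℝ) * (t - x) ^ m := by
      intro y _
      have hd : ∀ t ∈ Set.uIcc x y, HasDerivAt (fun t : ℝ => (t - x) ^ (m+1))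
          (((m+1 : ℕ) : ℝ) * (t - x) ^ m) t := by
        intro t _
        have h1 : HasDerivAt (fun t : ℝ => t - x) 1 t := (hasDerivAt_id t).sub_const x
        have h2 := (hasDerivAt_pow (m+1) (t - x)).comp t h1
        simpa [Function.comp_def] using h2
      rw [intervalIntegral.integral_eq_sub_of_hasDerivAt hd
        (hcont.intervalIntegrable x y)]
      simp
    have key := rk_parts a b x hax hxb p hp k
      (fun t => (t - x) ^ (m+1)) (fun t => ((m+1 : ℕ) : ℝ) * (t - x) ^ m)
      (hcont.intervalIntegrable a b) hg
    have e1 : ∫ t in a..b, rk a b x p (k+1) t * (((m+1 : ℕ) : ℝ) * (t - x) ^ m)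
        = ((m+1 : ℕ) : ℝ) * ∫ t in a..b, rk a b x p (k+1) t * (t - x) ^ m := by
      rw [← intervalIntegral.integral_const_mul]
      exact intervalIntegral.integral_congr fun t _ => by ring
    rw [e1] at key
    simp only [sub_self, zero_pow (Nat.succ_ne_zero m), mul_zero, zero_add] at key
    have ihm := ih (m+1)
    rw [ihm] at key
    have hne : ((m+1 : ℕ) : ℝ) ≠ 0 := by positivity
    have harr : m + 1 + k = m + (k + 1) := by omega
    rw [harr] at key
    have hfs : (((m+1).factorial : ℕ) : ℝ) = ((m+1 : ℕ) : ℝ) * (m.factorial : ℝ) := by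
      rw [Nat.factorial_succ]; push_cast; ring
    rw [hfs] at key
    have h6 : ((m+1 : ℕ) : ℝ) * ∫ t in a..b, rk a b x p (k+1) t * (t - x) ^ m
        = ((m+1 : ℕ) : ℝ) * ((m.factorial : ℝ) / (((m + (k+1)).factorial : ℕ) : ℝ)
            * ∫ t in a..b, p t * (t - x) ^ (m + (k+1))) := by
      rw [← key]; ring
    exact mul_left_cancel₀ hne h6

/-- Taylor-type integral representation: if `f` has `n−1` derivatives with `f^{(n−1)}`
absolutely continuous (encoded via the derivative functions `fd k` and the fundamental
theorem of calculus) and `p` is integrable, then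
`∫ p f − Σ_{k<n} (1/k!)(∫ p(t)(t−x)^k dt) f^{(k)}(x) = ∫ r_x^n f^{(n)}`. -/
theorem stmt5 (a b : ℝ) (hab : a < b) (n : ℕ) (hn : 1 ≤ n)
    (p : ℝ → ℝ) (hp : IntervalIntegrable p volume a b)
    (x : ℝ) (hx : x ∈ Set.Icc a b)
    (f : ℝ → ℝ) (fd : ℕ → ℝ → ℝ) (h0 : fd 0 = f)
    (hint : ∀ k < n, IntervalIntegrable (fd (k + 1)) volume a b)
    (hFTC : ∀ k < n, ∀ y ∈ Set.Icc a b, fd k y = fd k a + ∫ t in a..y, fd (k + 1) t) :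
    (∫ t in a..b, p t * f t)
        - ∑ k ∈ Finset.range n,
            (1 / (Nat.factorial k : ℝ)) * (∫ t in a..b, p t * (t - x) ^ k) * fd k x
      = ∫ t in a..b, rk a b x p n t * fd n t := by
  obtain ⟨hax, hxb⟩ := hx
  have hab' : a ≤ b := hab.le
  have main : ∀ j, j ≤ n →
      (∫ t in a..b, p t * f t)
        - ∑ k ∈ Finset.range j,
            (1 / (Nat.factorial k : ℝ)) * (∫ t in a..b, p t * (t - x) ^ k) * fd k x
      = ∫ t in a..b, rk a b x p j t * fd j t := by
    intro j
    induction j with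
    | zero => intro _; simp [rk_zero, h0]
    | succ j ihj =>
      intro hj
      have hj' : j < n := hj
      have prev := ihj hj'.le
      rw [Finset.sum_range_succ, ← sub_sub, prev]
      have hg : ∀ y ∈ Set.Icc a b, fd j y = fd j x + ∫ t in x..y, fd (j+1) t := by
        intro y hy
        have hia : IntervalIntegrable (fd (j+1)) volume a b := hint j hj'
        have hymem : y ∈ Set.uIcc a b := by rw [Set.uIcc_of_le hab']; exact hy
        have hxmem : x ∈ Set.uIcc a b := by rw [Set.uIcc_of_le hab']; exact ⟨hax, hxb⟩
        have hiy : IntervalIntegrable (fd (j+1)) volume a y :=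
          hia.mono_set (Set.uIcc_subset_uIcc Set.left_mem_uIcc hymem)
        have hix : IntervalIntegrable (fd (j+1)) volume a x :=
          hia.mono_set (Set.uIcc_subset_uIcc Set.left_mem_uIcc hxmem)
        rw [hFTC j hj' y hy, hFTC j hj' x ⟨hax, hxb⟩,
          ← intervalIntegral.integral_interval_sub_left hiy hix]
        ring
      have key := rk_parts a b x hax hxb p hp j (fd j) (fd (j+1)) (hint j hj') hg
      have hc : (∫ t in a..b, rk a b x p j t)
          = (1 / (Nat.factorial j : ℝ)) * ∫ t in a..b, p t * (t - x) ^ j := by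
        have hm := rk_moment a b x hax hxb p hp j 0
        simpa [Nat.factorial] using hm
      rw [key, hc]
      ring
  exact main n le_rfl
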